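/- Let a₁,…,a_m ∈ ℝⁿ be pairwise distinct and F(x) = (Σᵢ aᵢ/‖x-aᵢ‖)/(Σᵢ 1/‖x-aᵢ‖) for x not a vertex. Then lim_{x → a_k, x ≠ a_k} (F(x) - a_k)/‖x - a_k‖ = R_k, where R_k = Σ_{i≠k} (aᵢ - a_k)/‖aᵢ - a_k‖; in particular ‖F(x) - a_k‖/‖x - a_k‖ → ‖R_k‖. -/

import Mathlib

open Filter Topology

theorem stmt_18 (n m : ℕ) (a : Fin m → EuclideanSpace ℝ (Fin n))
    (hdist : Function.Injective a) (k : Fin m)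
    (F : EuclideanSpace ℝ (Fin n) → EuclideanSpace ℝ (Fin n))
    (hF : ∀ x ∉ Set.range a, F x = (∑ i, ‖x - a i‖⁻¹)⁻¹ • ∑ i, ‖x - a i‖⁻¹ • a i)
    (R : EuclideanSpace ℝ (Fin n))
    (hR : R = ∑ i ∈ Finset.univ.erase k, ‖a i - a k‖⁻¹ • (a i - a k)) :
    Tendsto (fun x => ‖x - a k‖⁻¹ • (F x - a k)) (𝓝[(Set.range a)ᶜ] (a k)) (𝓝 R) ∧
    Tendsto (fun x => ‖F x - a k‖ / ‖x - a k‖) (𝓝[(Set.range a)ᶜ] (a k)) (𝓝 ‖R‖) := by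
  set g : EuclideanSpace ℝ (Fin n) → EuclideanSpace ℝ (Fin n) := fun x =>
    (1 + ‖x - a k‖ * ∑ i ∈ Finset.univ.erase k, ‖x - a i‖⁻¹)⁻¹ •
      ∑ i ∈ Finset.univ.erase k, ‖x - a i‖⁻¹ • (a i - a k) with hg
  have hne : ∀ i ∈ Finset.univ.erase k, ‖a k - a i‖ ≠ 0 := by
    intro i hi
    simp only [Finset.mem_erase] at hi
    simp only [ne_eq, norm_eq_zero, sub_eq_zero]
    exact fun h => hi.1 (hdist h.symm)
  have hgcont : ContinuousAt g (a k) := by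
    apply ContinuousAt.fun_smul
    · apply ContinuousAt.inv₀
      · apply continuousAt_const.fun_add
        apply ContinuousAt.fun_mul
        · exact (continuous_norm.comp (continuous_id.sub continuous_const)).continuousAt
        · exact tendsto_finset_sum _ fun i hi =>
            ((continuous_norm.comp (continuous_id.sub continuous_const)).continuousAt).inv₀
              (hne i hi)
      · simp
    · exact tendsto_finset_sum _ fun i hi =>
        ((((continuous_norm.comp (continuous_id.sub continuous_const)).continuousAt).inv₀
          (hne i hi)).smul continuousAt_const)
  have hgval : g (a k) = R := by
    simp [hg, hR, sub_self, norm_sub_rev (a k)]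
  have hgt : Tendsto g (𝓝[(Set.range a)ᶜ] (a k)) (𝓝 R) := by
    rw [← hgval]
    exact hgcont.continuousWithinAt.tendsto
  have heq : ∀ x ∈ (Set.range a)ᶜ, ‖x - a k‖⁻¹ • (F x - a k) = g x := by
    intro x hx
    have hnorm : ∀ i, ‖x - a i‖ ≠ 0 := by
      intro i
      simp only [ne_eq, norm_eq_zero, sub_eq_zero]
      exact fun h => hx ⟨i, h.symm⟩
    have hpos : ∀ i, 0 < ‖x - a i‖⁻¹ := fun i =>
      inv_pos.2 ((hnorm i).lt_of_le' (norm_nonneg _))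
    set S : ℝ := ∑ i, ‖x - a i‖⁻¹ with hSdef
    have hS : S ≠ 0 := by
      have : 0 < S := Finset.sum_pos (fun i _ => hpos i) ⟨k, Finset.mem_univ k⟩
      exact this.ne'
    have hsum : (∑ i, ‖x - a i‖⁻¹ • a i) - S • a k =
        ∑ i ∈ Finset.univ.erase k, ‖x - a i‖⁻¹ • (a i - a k) := by
      rw [hSdef, Finset.sum_smul, ← Finset.sum_sub_distrib]
      simp only [← smul_sub]
      exact (Finset.sum_erase _ (by simp)).symm
    have hFx : F x - a k = S⁻¹ • ∑ i ∈ Finset.univ.erase k, ‖x - a i‖⁻¹ • (a i - a k) := by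
      rw [hF x hx, ← hSdef, ← hsum, smul_sub, inv_smul_smul₀ hS]
    have hc : ‖x - a k‖⁻¹ * S⁻¹ =
        (1 + ‖x - a k‖ * ∑ i ∈ Finset.univ.erase k, ‖x - a i‖⁻¹)⁻¹ := by
      rw [← mul_inv]
      congr 1
      have : S = ‖x - a k‖⁻¹ + ∑ i ∈ Finset.univ.erase k, ‖x - a i‖⁻¹ :=
        (Finset.add_sum_erase _ _ (Finset.mem_univ k)).symm
      rw [this, mul_add, mul_inv_cancel₀ (hnorm k)]
    rw [hFx, smul_smul, hc]
  have h1 : Tendsto (fun x => ‖x - a k‖⁻¹ • (F x - a k)) (𝓝[(Set.range a)ᶜ] (a k)) (𝓝 R) := by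
    refine hgt.congr' ?_
    filter_upwards [eventually_mem_nhdsWithin] with x hx using (heq x hx).symm
  refine ⟨h1, ?_⟩
  have h2 := h1.norm
  refine h2.congr fun x => ?_
  rw [norm_smul, Real.norm_eq_abs, abs_of_nonneg (inv_nonneg.2 (norm_nonneg _)),
    div_eq_inv_mul]
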